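/- Let M ≥ 3 and let u_1, …, u_K be unit vectors in a real inner product space with |⟨u_i, u_j⟩| < 1/M for all i ≠ j, and K ≥ 2. For 1 ≤ i ≤ K−1 set λ_i = ⟨u_i, u_K⟩ and w_i = u_i − λ_i u_K. Then ‖w_i‖² > 1 − 1/M², and for all 1 ≤ i ≠ j ≤ K−1 the normalized vectors u_i' = w_i/‖w_i‖ satisfy |⟨u_i', u_j'⟩| < 1/(M−1). -/

import Mathlib

open scoped RealInnerProductSpace

theorem projection_step (E : Type*) [NormedAddCommGroup E] [InnerProductSpace ℝ E]
    (M : ℕ) (hM : 3 ≤ M) (n : ℕ) (hn : 1 ≤ n)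
    (u : Fin (n + 1) → E)
    (hunit : ∀ i, ⟪u i, u i⟫ = (1 : ℝ))
    (horth : ∀ i j, i ≠ j → |⟪u i, u j⟫| < 1 / (M : ℝ))
    (lam : Fin n → ℝ) (hlam : ∀ i, lam i = ⟪u i.castSucc, u (Fin.last n)⟫)
    (w : Fin n → E) (hw : ∀ i, w i = u i.castSucc - lam i • u (Fin.last n)) :
    (∀ i, ‖w i‖ ^ 2 > 1 - 1 / (M : ℝ) ^ 2) ∧
      (∀ i j, i ≠ j →
        |⟪‖w i‖⁻¹ • w i, ‖w j‖⁻¹ • w j⟫| < 1 / ((M : ℝ) - 1)) := by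
  have hm3 : (3:ℝ) ≤ (M:ℝ) := by exact_mod_cast hM
  set m : ℝ := (M : ℝ) with hm
  have hm0 : 0 < m := by linarith
  have hne : ∀ i : Fin n, i.castSucc ≠ Fin.last n := by
    intro i
    simp [Fin.ext_iff]
    omega
  have hlam_bound : ∀ i : Fin n, |lam i| < 1 / m := by
    intro i
    rw [hlam]
    exact horth _ _ (hne i)
  have hinner : ∀ i j : Fin n,
      ⟪w i, w j⟫ = ⟪u i.castSucc, u j.castSucc⟫ - lam i * lam j := by
    intro i j
    have h1 : ⟪u (Fin.last n), u j.castSucc⟫ = lam j := by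
      rw [hlam, real_inner_comm]
    have h2 : ⟪u i.castSucc, u (Fin.last n)⟫ = lam i := (hlam i).symm
    rw [hw, hw]
    simp [inner_sub_left, inner_sub_right, real_inner_smul_left,
      real_inner_smul_right, hunit, h1, h2]
    rw [← real_inner_self_eq_norm_sq, hunit]
    ring
  have hnsq : ∀ i : Fin n, ‖w i‖ ^ 2 = 1 - lam i ^ 2 := by
    intro i
    rw [← real_inner_self_eq_norm_sq, hinner, hlam, real_inner_comm, ← hlam, hunit]
    ring
  have hlsq : ∀ i : Fin n, lam i ^ 2 < 1 / m ^ 2 := by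
    intro i
    have h := hlam_bound i
    have h0 := abs_nonneg (lam i)
    calc lam i ^ 2 = |lam i| ^ 2 := (sq_abs _).symm
      _ < (1 / m) ^ 2 := by exact pow_lt_pow_left₀ h h0 (by norm_num)
      _ = 1 / m ^ 2 := by rw [div_pow, one_pow]
  have part1 : ∀ i : Fin n, ‖w i‖ ^ 2 > 1 - 1 / m ^ 2 := by
    intro i
    rw [hnsq]
    linarith [hlsq i]
  refine ⟨part1, ?_⟩
  intro i j hij
  have hmsq : (0:ℝ) < 1 - 1 / m ^ 2 := by
    rw [sub_pos, div_lt_one (by positivity)]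
    nlinarith
  have hwi : 0 < ‖w i‖ := by nlinarith [part1 i, norm_nonneg (w i)]
  have hwj : 0 < ‖w j‖ := by nlinarith [part1 j, norm_nonneg (w j)]
  have hP : 1 - 1 / m ^ 2 < ‖w i‖ * ‖w j‖ := by
    nlinarith [part1 i, part1 j, sq_nonneg (‖w i‖ - ‖w j‖), sq_nonneg (‖w i‖*‖w j‖ - (1 - 1/m^2))]
  have habs : |⟪w i, w j⟫| < 1 / m + 1 / m ^ 2 := by
    rw [hinner]
    have h1 : |⟪u i.castSucc, u j.castSucc⟫| < 1 / m :=
      horth _ _ (by simpa [Fin.ext_iff] using (Fin.val_ne_of_ne hij))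
    have h2 : |lam i * lam j| < 1 / m ^ 2 := by
      rw [abs_mul]
      calc |lam i| * |lam j| < (1 / m) * (1 / m) :=
            mul_lt_mul'' (hlam_bound i) (hlam_bound j) (abs_nonneg _) (abs_nonneg _)
        _ = 1 / m ^ 2 := by rw [div_mul_div_comm, one_mul, sq]
    calc |⟪u i.castSucc, u j.castSucc⟫ - lam i * lam j|
        ≤ |⟪u i.castSucc, u j.castSucc⟫| + |lam i * lam j| := abs_sub _ _
      _ < 1 / m + 1 / m ^ 2 := by linarith
  rw [real_inner_smul_left, real_inner_smul_right, abs_mul, abs_mul,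
    abs_inv, abs_inv, abs_norm, abs_norm]
  rw [show ‖w i‖⁻¹ * (‖w j‖⁻¹ * |⟪w i, w j⟫|) = |⟪w i, w j⟫| / (‖w i‖ * ‖w j‖) by
    field_simp]
  rw [div_lt_div_iff₀ (by positivity) (by linarith : (0:ℝ) < m - 1)]
  have hm2 : (0:ℝ) < m ^ 2 := by positivity
  have key : (1 / m + 1 / m ^ 2) * (m - 1) = 1 - 1 / m ^ 2 := by
    field_simp
    ring
  have hA := abs_nonneg ⟪w i, w j⟫
  nlinarith [habs, hP]
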